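/- arXiv:2102.07128 — 8 statements merged into one kernel-verified Lean document; each statement's English description precedes it below -/
import Mathlib

section
/- Let σ ∈ (0,1) and 0 ≤ r ≤ t, and let v_σ(t) = e^{−t}/((1−σ) + σe^{−t}). Then σ ∫₀^{t−r} e^{−s} v_σ(t−s)² ds = e^{−t} σ (e^{−r} − e^{−t}) / ( (1 − σ(1−e^{−t})) (1 − σ(1−e^{−r})) ), and consequently ( σ ∫₀^{t−r} e^{−s} v_σ(t−s)² ds ) / v_σ(t) = σ (e^{−r} − e^{−t}) / (1 − σ(1−e^{−r})). -/
/-- Theorem 2.3 (computational core): with `v_σ(t) = e^{-t}/((1-σ) + σe^{-t})`,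
`σ ∫₀^{t-r} e^{-s} v_σ(t-s)² ds` equals the displayed expression, and the quotient by
`v_σ(t)` is the probability of the first branching time being at most `t - r`. -/
theorem stmt5 (σ r t : ℝ) (hσ : σ ∈ Set.Ioo (0 : ℝ) 1) (hr : 0 ≤ r) (hrt : r ≤ t)
    (v : ℝ → ℝ) (hv : ∀ s, v s = Real.exp (-s) / ((1 - σ) + σ * Real.exp (-s))) :
    σ * ∫ s in (0 : ℝ)..(t - r), Real.exp (-s) * (v (t - s)) ^ 2
      = Real.exp (-t) * σ * (Real.exp (-r) - Real.exp (-t)) /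
        ((1 - σ * (1 - Real.exp (-t))) * (1 - σ * (1 - Real.exp (-r)))) ∧
    (σ * ∫ s in (0 : ℝ)..(t - r), Real.exp (-s) * (v (t - s)) ^ 2) / v t
      = σ * (Real.exp (-r) - Real.exp (-t)) / (1 - σ * (1 - Real.exp (-r))) := by
  obtain ⟨hσ0, hσ1⟩ := hσ
  have hD : ∀ x : ℝ, 0 < (1 - σ) + σ * Real.exp x := fun x => by
    have := Real.exp_pos x; nlinarith
  set F : ℝ → ℝ := fun s => (-Real.exp (-t) / σ) * ((1 - σ) + σ * Real.exp (s - t))⁻¹ with hF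
  have hderiv : ∀ x ∈ Set.uIcc (0 : ℝ) (t - r),
      HasDerivAt F (Real.exp (-x) * (v (t - x)) ^ 2) x := by
    intro x _
    have h1 : HasDerivAt (fun s : ℝ => (1 - σ) + σ * Real.exp (s - t))
        (σ * Real.exp (x - t)) x := by
      have := ((hasDerivAt_id x).sub_const t).exp
      simpa using ((this.const_mul σ).const_add (1 - σ))
    have h2 := (h1.inv (hD (x - t)).ne').const_mul (-Real.exp (-t) / σ)
    refine h2.congr_deriv ?_
    symm
    rw [hv]
    have he : Real.exp (-(t - x)) = Real.exp (x - t) := by ring_nf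
    rw [he]
    have hne := (hD (x - t)).ne'
    field_simp
    have hx2 : Real.exp (-x) * Real.exp (x - t) ^ 2 = Real.exp (-t) * Real.exp (x - t) := by
      rw [sq, ← Real.exp_add, ← Real.exp_add, ← Real.exp_add]; ring_nf
    rw [← Real.exp_add]; ring_nf
  have hcont : ContinuousOn (fun s => Real.exp (-s) * (v (t - s)) ^ 2)
      (Set.uIcc (0 : ℝ) (t - r)) := by
    apply Continuous.continuousOn
    have : Continuous fun s : ℝ => (1 - σ) + σ * Real.exp (-(t - s)) :=
      continuous_const.add (continuous_const.mul
        (Real.continuous_exp.comp (continuous_const.sub continuous_id).neg))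
    simp only [hv]
    exact (Real.continuous_exp.comp continuous_neg).mul
      (((Real.continuous_exp.comp (continuous_const.sub continuous_id).neg).div this
        (fun x => (hD (-(t - x))).ne')).pow 2)
  have key : ∫ s in (0 : ℝ)..(t - r), Real.exp (-s) * (v (t - s)) ^ 2 = F (t - r) - F 0 :=
    intervalIntegral.integral_eq_sub_of_hasDerivAt hderiv hcont.intervalIntegrable
  have ha := (hD (-t)).ne'
  have hb := (hD (-r)).ne'
  have hone : t - r - t = -r := by ring
  have first : σ * ∫ s in (0 : ℝ)..(t - r), Real.exp (-s) * (v (t - s)) ^ 2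
      = Real.exp (-t) * σ * (Real.exp (-r) - Real.exp (-t)) /
        ((1 - σ * (1 - Real.exp (-t))) * (1 - σ * (1 - Real.exp (-r)))) := by
    rw [key, hF]
    simp only [hone, zero_sub]
    have h1 : (1 - σ * (1 - Real.exp (-t))) = (1 - σ) + σ * Real.exp (-t) := by ring
    have h2 : (1 - σ * (1 - Real.exp (-r))) = (1 - σ) + σ * Real.exp (-r) := by ring
    rw [h1, h2]
    field_simp
    ring
  refine ⟨first, ?_⟩
  rw [first, hv]
  have h1 : (1 - σ * (1 - Real.exp (-t))) = (1 - σ) + σ * Real.exp (-t) := by ring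
  have h2 : (1 - σ * (1 - Real.exp (-r))) = (1 - σ) + σ * Real.exp (-r) := by ring
  rw [h1, h2]
  have het := Real.exp_ne_zero (-t)
  field_simp
end

section
/- Let ε > 0 and let λ : (0,∞) → (0,∞) satisfy lim_{t→∞} λ(t) = 0 and lim_{t→∞} (t + ln(λ(t)ε²)) = ∞. Set σ_t := 1/cosh(ε√(2λ(t))) and p(t) := 1 − σ_t(1 − e^{−t}). Then for every θ > 0, lim_{t→∞} p(t) / ( e^{θλ(t)ε²} − σ_t(1 − e^{−t}) ) = 1/(1+θ). Equivalently, if N_t is geometric on {1,2,...} with parameter p(t), then λ(t)ε² N_t converges in distribution to a standard exponential random variable. -/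
open Filter Real

private lemma slope_exp :
    Tendsto (fun x => (Real.exp x - 1) / x) (nhdsWithin 0 {(0:ℝ)}ᶜ) (nhds 1) := by
  have h := Real.hasDerivAt_exp 0
  rw [hasDerivAt_iff_tendsto_slope] at h
  have : (slope Real.exp 0) = fun x => (Real.exp x - 1) / x := by
    funext x
    simp [slope_def_field, Real.exp_zero]
  rw [this, Real.exp_zero] at h
  exact h

private lemma slope_sinh :
    Tendsto (fun x => Real.sinh x / x) (nhdsWithin 0 {(0:ℝ)}ᶜ) (nhds 1) := by
  have h := Real.hasDerivAt_sinh 0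
  rw [hasDerivAt_iff_tendsto_slope] at h
  have : (slope Real.sinh 0) = fun x => Real.sinh x / x := by
    funext x
    simp [slope_def_field, Real.sinh_zero]
  rw [this, Real.cosh_zero] at h
  exact h

private lemma sech_lim :
    Tendsto (fun x => (1 - 1 / Real.cosh x) / (x ^ 2 / 2)) (nhdsWithin 0 {(0:ℝ)}ᶜ) (nhds 1) := by
  have hhalf : Tendsto (fun x : ℝ => x / 2) (nhdsWithin 0 {(0:ℝ)}ᶜ) (nhdsWithin 0 {(0:ℝ)}ᶜ) := by
    apply tendsto_nhdsWithin_of_tendsto_nhds_of_eventually_within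
    · have : Tendsto (fun x : ℝ => x / 2) (nhds 0) (nhds (0 / 2)) :=
        (tendsto_id.div_const 2)
      simpa using this.mono_left nhdsWithin_le_nhds
    · filter_upwards [self_mem_nhdsWithin] with x hx
      simp only [Set.mem_compl_iff, Set.mem_singleton_iff] at hx ⊢
      intro h; apply hx; linarith
  have h1 : Tendsto (fun x : ℝ => (Real.sinh (x / 2) / (x / 2)) ^ 2)
      (nhdsWithin 0 {(0:ℝ)}ᶜ) (nhds 1) := by
    have := (slope_sinh.comp hhalf).pow 2
    simpa using this
  have h2 : Tendsto (fun x : ℝ => (Real.cosh x)⁻¹) (nhdsWithin 0 {(0:ℝ)}ᶜ) (nhds 1) := by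
    have : Tendsto (fun x : ℝ => (Real.cosh x)⁻¹) (nhds 0) (nhds 1) := by
      have := (Real.continuous_cosh.tendsto 0).inv₀ (by simp)
      simpa using this
    exact this.mono_left nhdsWithin_le_nhds
  have key := h1.mul h2
  rw [mul_one] at key
  apply key.congr'
  filter_upwards [self_mem_nhdsWithin] with x hx
  simp only [Set.mem_compl_iff, Set.mem_singleton_iff] at hx
  have hc : Real.cosh x = 1 + 2 * Real.sinh (x / 2) ^ 2 := by
    have h2m := Real.cosh_two_mul (x / 2)
    rw [show 2 * (x / 2) = x by ring] at h2m
    have hsq := Real.cosh_sq (x / 2)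
    nlinarith
  have hcpos : 0 < Real.cosh x := Real.cosh_pos x
  have hx2 : x / 2 ≠ 0 := by intro h; apply hx; linarith
  rw [hc]
  field_simp
  ring

/-- Theorem 5.2(i): the Laplace transform `E[e^{-θ λ(t)ε² n(t)}]` of the geometric
particle number converges to `1/(1+θ)`, i.e. `λ(t)ε² n(t)` converges to a standard
exponential random variable. -/
theorem stmt7 (ε : ℝ) (hε : 0 < ε) (lam : ℝ → ℝ) (hpos : ∀ t > (0 : ℝ), 0 < lam t)
    (h0 : Filter.Tendsto lam Filter.atTop (nhds 0))
    (h1 : Filter.Tendsto (fun t => t + Real.log (lam t * ε ^ 2)) Filter.atTop Filter.atTop)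
    (σ : ℝ → ℝ) (hσ : ∀ t, σ t = 1 / Real.cosh (ε * Real.sqrt (2 * lam t)))
    (p : ℝ → ℝ) (hp : ∀ t, p t = 1 - σ t * (1 - Real.exp (-t)))
    (θ : ℝ) (hθ : 0 < θ) :
    Filter.Tendsto
      (fun t => p t / (Real.exp (θ * (lam t * ε ^ 2)) - σ t * (1 - Real.exp (-t))))
      Filter.atTop (nhds (1 / (1 + θ))) := by
  set a : ℝ → ℝ := fun t => lam t * ε ^ 2 with ha
  set x : ℝ → ℝ := fun t => ε * Real.sqrt (2 * lam t) with hxdef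
  have hεsq : (0:ℝ) < ε ^ 2 := by positivity
  have hapos : ∀ᶠ t in atTop, 0 < a t := by
    filter_upwards [eventually_gt_atTop (0:ℝ)] with t ht
    have := hpos t ht; positivity
  have hxpos : ∀ᶠ t in atTop, 0 < x t := by
    filter_upwards [eventually_gt_atTop (0:ℝ)] with t ht
    have hl := hpos t ht
    have : 0 < Real.sqrt (2 * lam t) := Real.sqrt_pos.mpr (by linarith)
    positivity
  have haxt : ∀ᶠ t in atTop, a t = x t ^ 2 / 2 := by
    filter_upwards [eventually_gt_atTop (0:ℝ)] with t ht
    have hl := (hpos t ht).le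
    have : Real.sqrt (2 * lam t) ^ 2 = 2 * lam t := Real.sq_sqrt (by linarith)
    simp only [ha, hxdef]
    rw [mul_pow, this]; ring
  -- a → 0
  have ha0 : Tendsto a atTop (nhds 0) := by
    have := h0.mul_const (ε ^ 2); simpa using this
  -- x → 0
  have hx0 : Tendsto x atTop (nhds 0) := by
    have h2l : Tendsto (fun t => 2 * lam t) atTop (nhds 0) := by
      have := h0.const_mul (2:ℝ); simpa using this
    have hs : Tendsto (fun t => Real.sqrt (2 * lam t)) atTop (nhds 0) := by
      have := (Real.continuous_sqrt.tendsto 0).comp h2l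
      rw [Real.sqrt_zero] at this
      exact this
    have := hs.const_mul ε; rw [mul_zero] at this; exact this
  -- x → 0 within ≠ 0
  have hx0' : Tendsto x atTop (nhdsWithin 0 {(0:ℝ)}ᶜ) := by
    apply tendsto_nhdsWithin_of_tendsto_nhds_of_eventually_within _ hx0
    filter_upwards [hxpos] with t ht
    simp only [Set.mem_compl_iff, Set.mem_singleton_iff]
    exact ne_of_gt ht
  -- θ * a → 0 within ≠ 0
  have hθa0 : Tendsto (fun t => θ * a t) atTop (nhdsWithin 0 {(0:ℝ)}ᶜ) := by
    apply tendsto_nhdsWithin_of_tendsto_nhds_of_eventually_within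
    · have := ha0.const_mul θ; simpa using this
    · filter_upwards [hapos] with t ht
      simp only [Set.mem_compl_iff, Set.mem_singleton_iff]
      positivity
  -- (exp(θa)-1)/(θa) → 1
  have L1 : Tendsto (fun t => (Real.exp (θ * a t) - 1) / (θ * a t)) atTop (nhds 1) := by
    have := slope_exp.comp hθa0; exact this
  -- (1 - σ)/a → 1
  have L2 : Tendsto (fun t => (1 - σ t) / a t) atTop (nhds 1) := by
    have := sech_lim.comp hx0'
    apply this.congr'
    filter_upwards [haxt] with t ht
    simp only [Function.comp]
    rw [hσ t, ht]
  -- σ → 1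
  have Lσ : Tendsto σ atTop (nhds 1) := by
    have hc : Tendsto (fun t => Real.cosh (x t)) atTop (nhds 1) := by
      have := (Real.continuous_cosh.tendsto 0).comp hx0
      rw [Real.cosh_zero] at this; exact this
    have := hc.inv₀ one_ne_zero
    rw [inv_one] at this
    apply this.congr
    intro t; rw [hσ t, one_div]
  -- exp(-t)/a → 0
  have L3 : Tendsto (fun t => Real.exp (-t) / a t) atTop (nhds 0) := by
    have hbot : Tendsto (fun t => -(t + Real.log (a t))) atTop atBot := by
      exact tendsto_neg_atBot_iff.mpr h1
    have := Real.tendsto_exp_atBot.comp hbot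
    apply this.congr'
    filter_upwards [hapos] with t ht
    simp only [Function.comp]
    rw [neg_add, Real.exp_add, Real.exp_neg (Real.log (a t)), Real.exp_log ht]
    ring
  -- p/a → 1
  have L4 : Tendsto (fun t => p t / a t) atTop (nhds 1) := by
    have := L2.add (Lσ.mul L3)
    rw [mul_zero, add_zero] at this
    apply this.congr'
    filter_upwards [hapos] with t ht
    rw [hp t]
    field_simp
    ring
  -- a/p → 1
  have L5 : Tendsto (fun t => a t / p t) atTop (nhds 1) := by
    have := L4.inv₀ one_ne_zero
    rw [inv_one] at this
    apply this.congr
    intro t; rw [inv_div]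
  -- p > 0 always
  have hppos : ∀ t, 0 < p t := by
    intro t
    rw [hp t, hσ t]
    have hc : 1 ≤ Real.cosh (ε * Real.sqrt (2 * lam t)) := Real.one_le_cosh _
    have hcpos : 0 < Real.cosh (ε * Real.sqrt (2 * lam t)) := by linarith
    have hσpos : 0 < 1 / Real.cosh (ε * Real.sqrt (2 * lam t)) := by positivity
    have hσle : 1 / Real.cosh (ε * Real.sqrt (2 * lam t)) ≤ 1 := by
      rw [div_le_one hcpos]; exact hc
    have he : 0 < Real.exp (-t) := Real.exp_pos _
    nlinarith
  -- (exp(θa)-1)/p → θ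
  have L6 : Tendsto (fun t => (Real.exp (θ * a t) - 1) / p t) atTop (nhds θ) := by
    have := (L1.mul (tendsto_const_nhds (x := θ))).mul L5
    rw [one_mul, mul_one] at this
    apply this.congr'
    filter_upwards [hapos] with t ht
    have hpne := (hppos t).ne'
    have hane := ht.ne'
    field_simp
  -- final
  have L7 : Tendsto (fun t => ((Real.exp (θ * a t) - 1) / p t + 1)⁻¹) atTop
      (nhds (1 / (1 + θ))) := by
    have := (L6.add tendsto_const_nhds).inv₀ (by positivity : (θ + 1 : ℝ) ≠ 0)
    rw [show (θ + 1 : ℝ)⁻¹ = 1 / (1 + θ) by rw [one_div, add_comm]] at this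
    exact this
  apply L7.congr'
  filter_upwards [hapos] with t ht
  have hpne := (hppos t).ne'
  have hD : Real.exp (θ * a t) - σ t * (1 - Real.exp (-t))
      = (Real.exp (θ * a t) - 1) + p t := by
    rw [hp t]; ring
  have hDpos : 0 < (Real.exp (θ * a t) - 1) + p t := by
    have : (1:ℝ) ≤ Real.exp (θ * a t) := by
      rw [show (1:ℝ) = Real.exp 0 by simp]
      exact Real.exp_le_exp.mpr (by positivity)
    have := hppos t; linarith
  show ((Real.exp (θ * a t) - 1) / p t + 1)⁻¹
      = p t / (Real.exp (θ * a t) - σ t * (1 - Real.exp (-t)))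
  rw [hD]
  rw [div_add' _ _ _ hpne, inv_div, one_mul]
end

section
/- Let ε > 0 and let λ : (0,∞) → (0,∞) satisfy lim_{t→∞} λ(t) = 0 and lim_{t→∞} (t + ln(λ(t)ε²)) = ∞. Fix ρ ∈ ℝ, set σ_t := 1/cosh(ε√(2λ(t))), s(t) := t + ln(λ(t)ε²) + ρ, and q := 1/(1 + e^ρ). Then for every γ ∈ ℝ with e^γ(1−q) < 1, lim_{t→∞} (1 − σ_t(1−e^{−t})) / ( e^{−γ}(1 − σ_t(1 − e^{−t+s(t)})) − σ_t(e^{s(t)−t} − e^{−t}) ) = q/(e^{−γ} − (1−q)) = Σ_{n=1}^∞ e^{γn} q(1−q)^{n−1}. -/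
open Filter Real

private lemma sinh_div_self' : Tendsto (fun y : ℝ => Real.sinh y / y)
    (nhdsWithin 0 {(0:ℝ)}ᶜ) (nhds 1) := by
  have h := (Real.hasDerivAt_sinh 0)
  rw [hasDerivAt_iff_tendsto_slope] at h
  rw [Real.cosh_zero] at h
  refine h.congr' ?_
  filter_upwards [self_mem_nhdsWithin] with y hy
  simp [slope_def_field, div_eq_div_iff]

private lemma cosh_ratio' : Tendsto (fun y : ℝ => (1 - 1 / Real.cosh y) / (y ^ 2 / 2))
    (nhdsWithin 0 {(0:ℝ)}ᶜ) (nhds 1) := by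
  have hhalf : Tendsto (fun y : ℝ => y / 2) (nhdsWithin 0 {(0:ℝ)}ᶜ) (nhdsWithin 0 {(0:ℝ)}ᶜ) := by
    rw [tendsto_nhdsWithin_iff]
    constructor
    · have : Tendsto (fun y : ℝ => y / 2) (nhds 0) (nhds (0/2)) :=
        (continuous_id.div_const 2).tendsto 0
      simpa using this.mono_left nhdsWithin_le_nhds
    · filter_upwards [self_mem_nhdsWithin] with y hy
      simp only [Set.mem_compl_iff, Set.mem_singleton_iff] at hy ⊢
      intro h; exact hy (by linarith [h])
  have h1 : Tendsto (fun y : ℝ => (Real.sinh (y/2) / (y/2)) ^ 2 / Real.cosh y)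
      (nhdsWithin 0 {(0:ℝ)}ᶜ) (nhds 1) := by
    have hsq : Tendsto (fun y : ℝ => (Real.sinh (y/2) / (y/2)) ^ 2)
        (nhdsWithin 0 {(0:ℝ)}ᶜ) (nhds 1) := by
      have := (sinh_div_self'.comp hhalf).pow 2
      simpa using this
    have hcosh : Tendsto (fun y : ℝ => Real.cosh y) (nhdsWithin 0 {(0:ℝ)}ᶜ) (nhds 1) := by
      have : Tendsto Real.cosh (nhds 0) (nhds (Real.cosh 0)) :=
        Real.continuous_cosh.tendsto 0
      rw [Real.cosh_zero] at this
      exact this.mono_left nhdsWithin_le_nhds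
    have := hsq.div hcosh one_ne_zero
    rw [div_one] at this
    exact this
  refine h1.congr' ?_
  filter_upwards [self_mem_nhdsWithin] with y hy
  have hy0 : y ≠ 0 := hy
  have hc : Real.cosh y ≠ 0 := ne_of_gt (Real.cosh_pos y)
  have key : Real.cosh y - 1 = 2 * Real.sinh (y/2) ^ 2 := by
    have := Real.cosh_two_mul (y/2)
    have h2 : 2 * (y/2) = y := by ring
    rw [h2] at this
    rw [this, Real.cosh_sq]
    ring
  field_simp
  linear_combination (-1 : ℝ) * key

/-- Theorem 5.2(ii): the moment generating function of the number of particles at time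
`s(t) = t + ln(λ(t)ε²) + ρ` converges to that of a geometric random variable on
`{1,2,...}` with parameter `q = 1/(1+e^ρ)`. -/
theorem stmt8 (ε : ℝ) (hε : 0 < ε) (lam : ℝ → ℝ) (hpos : ∀ t > (0 : ℝ), 0 < lam t)
    (h0 : Filter.Tendsto lam Filter.atTop (nhds 0))
    (h1 : Filter.Tendsto (fun t => t + Real.log (lam t * ε ^ 2)) Filter.atTop Filter.atTop)
    (ρ : ℝ)
    (σ : ℝ → ℝ) (hσ : ∀ t, σ t = 1 / Real.cosh (ε * Real.sqrt (2 * lam t)))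
    (s : ℝ → ℝ) (hs : ∀ t, s t = t + Real.log (lam t * ε ^ 2) + ρ)
    (q : ℝ) (hq : q = 1 / (1 + Real.exp ρ))
    (γ : ℝ) (hγ : Real.exp γ * (1 - q) < 1) :
    Filter.Tendsto
      (fun t => (1 - σ t * (1 - Real.exp (-t))) /
        (Real.exp (-γ) * (1 - σ t * (1 - Real.exp (-t + s t)))
          - σ t * (Real.exp (s t - t) - Real.exp (-t))))
      Filter.atTop (nhds (q / (Real.exp (-γ) - (1 - q)))) ∧
    q / (Real.exp (-γ) - (1 - q))
      = ∑' n : ℕ, Real.exp (γ * (n + 1)) * q * (1 - q) ^ n := by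
  have hXpos : (0:ℝ) < 1 + Real.exp ρ := by positivity
  have heγ : Real.exp γ * Real.exp (-γ) = 1 := by
    rw [← Real.exp_add]; simp
  have hq1 : q * (1 + Real.exp ρ) = 1 := by rw [hq]; field_simp
  have h1qe : (1 - q) * (1 + Real.exp ρ) = Real.exp ρ := by rw [hq]; field_simp; ring
  have h1qpos : 0 < 1 - q := by nlinarith [Real.exp_pos ρ]
  have h2 : 1 - q < Real.exp (-γ) := by nlinarith [Real.exp_pos (-γ), Real.exp_pos γ]
  have hdenpos : 0 < Real.exp (-γ) - (1 - q) := by linarith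
  have hd : 0 < Real.exp (-γ) * (1 + Real.exp ρ) - Real.exp ρ := by nlinarith
  -- auxiliary functions
  set Av : ℝ → ℝ := fun t => (1 - σ t) / (lam t * ε ^ 2) with hAv
  set Bv : ℝ → ℝ := fun t => Real.exp (-t) / (lam t * ε ^ 2) with hBv
  -- x t → 0 within {≠0}
  have hx0 : Tendsto (fun t => ε * Real.sqrt (2 * lam t)) atTop (nhds 0) := by
    have h2l : Tendsto (fun t => 2 * lam t) atTop (nhds 0) := by
      simpa using h0.const_mul 2
    have hsq : Tendsto (fun t => Real.sqrt (2 * lam t)) atTop (nhds 0) := by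
      have := (Real.continuous_sqrt.tendsto 0).comp h2l
      rw [Real.sqrt_zero] at this
      exact this
    simpa using hsq.const_mul ε
  have hx : Tendsto (fun t => ε * Real.sqrt (2 * lam t)) atTop (nhdsWithin 0 {(0:ℝ)}ᶜ) := by
    rw [tendsto_nhdsWithin_iff]
    refine ⟨hx0, ?_⟩
    filter_upwards [eventually_gt_atTop (0:ℝ)] with t ht
    have : 0 < Real.sqrt (2 * lam t) := Real.sqrt_pos.2 (by linarith [hpos t ht])
    simp only [Set.mem_compl_iff, Set.mem_singleton_iff]
    positivity
  -- σ → 1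
  have hσ1 : Tendsto σ atTop (nhds 1) := by
    have hcosh : Tendsto (fun t => Real.cosh (ε * Real.sqrt (2 * lam t))) atTop (nhds 1) := by
      have := (Real.continuous_cosh.tendsto 0).comp hx0
      rw [Real.cosh_zero] at this
      exact this
    have h : Tendsto (fun t => 1 / Real.cosh (ε * Real.sqrt (2 * lam t))) atTop (nhds (1/1)) :=
      (tendsto_const_nhds (x := (1:ℝ))).div hcosh one_ne_zero
    rw [div_one] at h
    exact h.congr (fun t => (hσ t).symm)
  -- Av → 1
  have hA : Tendsto Av atTop (nhds 1) := by
    have h := cosh_ratio'.comp hx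
    refine h.congr' ?_
    filter_upwards [eventually_gt_atTop (0:ℝ)] with t ht
    have hl : 0 < lam t := hpos t ht
    have hsq : (ε * Real.sqrt (2 * lam t)) ^ 2 = 2 * (lam t * ε ^ 2) := by
      rw [mul_pow, Real.sq_sqrt (by linarith : (0:ℝ) ≤ 2 * lam t)]
      ring
    simp only [Function.comp, hAv, hσ t, hsq]
    ring_nf
  -- Bv → 0
  have hB : Tendsto Bv atTop (nhds 0) := by
    have h := Real.tendsto_exp_atBot.comp (tendsto_neg_atTop_atBot.comp h1)
    refine h.congr' ?_
    filter_upwards [eventually_gt_atTop (0:ℝ)] with t ht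
    have hl : 0 < lam t * ε ^ 2 := by have := hpos t ht; positivity
    simp only [Function.comp, hBv]
    rw [neg_add, Real.exp_add, Real.exp_neg (Real.log _), Real.exp_log hl, div_eq_mul_inv]
  -- limit of rewritten quotient
  have hN : Tendsto (fun t => Av t + σ t * Bv t) atTop (nhds 1) := by
    have := hA.add (hσ1.mul hB)
    simpa using this
  have hE : Tendsto
      (fun t => Real.exp (-γ) * (Av t + σ t * Real.exp ρ) - σ t * (Real.exp ρ - Bv t))
      atTop (nhds (Real.exp (-γ) * (1 + Real.exp ρ) - Real.exp ρ)) := by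
    have hc1 : Tendsto (fun _ : ℝ => Real.exp ρ) atTop (nhds (Real.exp ρ)) := tendsto_const_nhds
    have h := ((hA.add (hσ1.mul hc1)).const_mul (Real.exp (-γ))).sub
      (hσ1.mul (hc1.sub hB))
    have hval : Real.exp (-γ) * (1 + 1 * Real.exp ρ) - 1 * (Real.exp ρ - 0)
        = Real.exp (-γ) * (1 + Real.exp ρ) - Real.exp ρ := by ring
    rwa [hval] at h
  have hQ : Tendsto
      (fun t => (Av t + σ t * Bv t) /
        (Real.exp (-γ) * (Av t + σ t * Real.exp ρ) - σ t * (Real.exp ρ - Bv t)))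
      atTop (nhds (1 / (Real.exp (-γ) * (1 + Real.exp ρ) - Real.exp ρ))) :=
    hN.div hE hd.ne'
  have hL : q / (Real.exp (-γ) - (1 - q))
      = 1 / (Real.exp (-γ) * (1 + Real.exp ρ) - Real.exp ρ) := by
    rw [div_eq_div_iff hdenpos.ne' hd.ne']
    linear_combination (Real.exp (-γ) - 1) * hq1
  constructor
  · rw [hL]
    refine Tendsto.congr' ?_ hQ
    filter_upwards [eventually_gt_atTop (0:ℝ)] with t ht
    have hl : 0 < lam t * ε ^ 2 := by have := hpos t ht; positivity
    have hst : -t + s t = Real.log (lam t * ε ^ 2) + ρ := by rw [hs]; ring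
    have hst2 : s t - t = Real.log (lam t * ε ^ 2) + ρ := by rw [hs]; ring
    have he1 : Real.exp (-t + s t) = (lam t * ε ^ 2) * Real.exp ρ := by
      rw [hst, Real.exp_add, Real.exp_log hl]
    have he2 : Real.exp (s t - t) = (lam t * ε ^ 2) * Real.exp ρ := by
      rw [hst2, Real.exp_add, Real.exp_log hl]
    have hNum : 1 - σ t * (1 - Real.exp (-t))
        = (lam t * ε ^ 2) * (Av t + σ t * Bv t) := by
      simp only [hAv, hBv]
      field_simp [(hpos t ht).ne']
      ring
    have hDen : Real.exp (-γ) * (1 - σ t * (1 - Real.exp (-t + s t)))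
          - σ t * (Real.exp (s t - t) - Real.exp (-t))
        = (lam t * ε ^ 2) *
          (Real.exp (-γ) * (Av t + σ t * Real.exp ρ) - σ t * (Real.exp ρ - Bv t)) := by
      rw [he1, he2]
      simp only [hAv, hBv]
      field_simp [(hpos t ht).ne']
      ring
    rw [hDen]
    rw [hNum, mul_div_mul_left _ _ hl.ne']
  · -- geometric series
    have hr0 : 0 ≤ Real.exp γ * (1 - q) := by positivity
    have hgeo := tsum_geometric_of_lt_one hr0 hγ
    have hterm : ∀ n : ℕ, Real.exp (γ * (n + 1)) * q * (1 - q) ^ n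
        = (Real.exp γ * q) * (Real.exp γ * (1 - q)) ^ n := by
      intro n
      have hexp : Real.exp (γ * (n + 1)) = Real.exp γ ^ (n + 1) := by
        rw [← Real.exp_nat_mul]
        push_cast
        ring_nf
      rw [hexp, pow_succ, mul_pow]
      ring
    have hsum : ∑' n : ℕ, Real.exp (γ * (n + 1)) * q * (1 - q) ^ n
        = (Real.exp γ * q) * (1 - Real.exp γ * (1 - q))⁻¹ := by
      rw [tsum_congr hterm, tsum_mul_left, hgeo]
    rw [hsum, ← div_eq_mul_inv, div_eq_div_iff hdenpos.ne' (by linarith : (0:ℝ) < 1 - Real.exp γ * (1 - q)).ne']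
    linear_combination (-q) * heγ
end

section
/- Let ε > 0 and let λ : (0,∞) → (0,∞) satisfy lim_{t→∞} λ(t) = 0 and lim_{t→∞} (t + ln(λ(t)ε²)) = ∞. Set σ_t := 1/cosh(ε√(2λ(t))). Then for every ρ ∈ ℝ, setting r(t) := −ln(λ(t)ε²) − ρ, one has lim_{t→∞} σ_t (e^{−r(t)} − e^{−t}) / (1 − σ_t(1 − e^{−r(t)})) = 1/(e^{−ρ} + 1). -/
open Filter Real Topology

/-- The key asymptotic: `(1 - 1/cosh x)/(x²/2) → 1` as `x → 0` (punctured). -/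
lemma aux_sech :
    Filter.Tendsto (fun x : ℝ => (1 - 1 / Real.cosh x) / (x ^ 2 / 2))
      (𝓝[≠] (0:ℝ)) (𝓝 1) := by
  -- slope of sinh at 0
  have hslope : Tendsto (fun y : ℝ => Real.sinh y / y) (𝓝[≠] (0:ℝ)) (𝓝 1) := by
    have h := (hasDerivAt_iff_tendsto_slope.mp (Real.hasDerivAt_sinh 0))
    rw [Real.cosh_zero] at h
    refine h.congr' ?_
    filter_upwards [self_mem_nhdsWithin] with y hy
    simp [slope_def_field]
  have hhalf : Tendsto (fun x : ℝ => x / 2) (𝓝[≠] (0:ℝ)) (𝓝[≠] (0:ℝ)) := by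
    rw [tendsto_nhdsWithin_iff]
    constructor
    · have : Tendsto (fun x : ℝ => x / 2) (𝓝 (0:ℝ)) (𝓝 (0/2)) :=
        (tendsto_id.div_const 2)
      simpa using this.mono_left nhdsWithin_le_nhds
    · filter_upwards [self_mem_nhdsWithin] with x hx
      simp only [Set.mem_compl_iff, Set.mem_singleton_iff] at hx ⊢
      exact fun h => hx (by linarith)
  have hcosh : Tendsto (fun x : ℝ => Real.cosh x) (𝓝[≠] (0:ℝ)) (𝓝 1) := by
    have := (Real.continuous_cosh.tendsto 0).mono_left (nhdsWithin_le_nhds (s := {(0:ℝ)}ᶜ))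
    simpa using this
  have hmain : Tendsto (fun x : ℝ => (Real.sinh (x/2) / (x/2)) ^ 2 * (1 / Real.cosh x))
      (𝓝[≠] (0:ℝ)) (𝓝 1) := by
    have h1 := (hslope.comp hhalf).pow 2
    have h2 : Tendsto (fun x : ℝ => 1 / Real.cosh x) (𝓝[≠] (0:ℝ)) (𝓝 1) := by
      simpa using hcosh.inv₀ one_ne_zero
    simpa using h1.mul h2
  refine hmain.congr' ?_
  filter_upwards [self_mem_nhdsWithin] with x hx
  simp only [Set.mem_compl_iff, Set.mem_singleton_iff] at hx
  have hc : Real.cosh x ≠ 0 := by positivity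
  have hcosh1 : Real.cosh x - 1 = 2 * Real.sinh (x/2) ^ 2 := by
    have h2 : Real.cosh (2 * (x/2)) = Real.cosh (x/2) ^ 2 + Real.sinh (x/2) ^ 2 :=
      Real.cosh_two_mul _
    have h3 : Real.cosh (x/2) ^ 2 = Real.sinh (x/2) ^ 2 + 1 := Real.cosh_sq _
    have h4 : Real.cosh x = Real.cosh (x/2) ^ 2 + Real.sinh (x/2) ^ 2 := by
      rw [← h2]; ring_nf
    rw [h4, h3]; ring
  have h1 : 1 - 1 / Real.cosh x = (Real.cosh x - 1) / Real.cosh x := by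
    field_simp
  rw [h1, hcosh1, div_pow]
  field_simp

/-- Theorem 5.3: with `r(t) = -ln(λ(t)ε²) - ρ`, the probability of the first branching
time being at most `t - r(t)` converges to `1/(e^{-ρ}+1)`. -/
theorem stmt10 (ε : ℝ) (hε : 0 < ε) (lam : ℝ → ℝ) (hpos : ∀ t > (0 : ℝ), 0 < lam t)
    (h0 : Filter.Tendsto lam Filter.atTop (nhds 0))
    (h1 : Filter.Tendsto (fun t => t + Real.log (lam t * ε ^ 2)) Filter.atTop Filter.atTop)
    (σ : ℝ → ℝ) (hσ : ∀ t, σ t = 1 / Real.cosh (ε * Real.sqrt (2 * lam t)))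
    (ρ : ℝ) (r : ℝ → ℝ) (hr : ∀ t, r t = -Real.log (lam t * ε ^ 2) - ρ) :
    Filter.Tendsto
      (fun t => σ t * (Real.exp (-r t) - Real.exp (-t)) /
        (1 - σ t * (1 - Real.exp (-r t))))
      Filter.atTop (nhds (1 / (Real.exp (-ρ) + 1))) := by
  set x : ℝ → ℝ := fun t => ε * Real.sqrt (2 * lam t) with hx
  have hx0 : Tendsto x atTop (𝓝 0) := by
    have h2 : Tendsto (fun t => 2 * lam t) atTop (𝓝 (2 * 0)) := h0.const_mul 2
    have h3 : Tendsto (fun t => Real.sqrt (2 * lam t)) atTop (𝓝 (Real.sqrt (2*0))) :=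
      (Real.continuous_sqrt.tendsto _).comp h2
    have := h3.const_mul ε
    simpa [hx] using this
  have hxpos : ∀ᶠ t in atTop, 0 < x t := by
    filter_upwards [eventually_gt_atTop 0] with t ht
    have := hpos t ht
    have : 0 < 2 * lam t := by linarith
    exact mul_pos hε (Real.sqrt_pos.mpr this)
  have hxne : Tendsto x atTop (𝓝[≠] (0:ℝ)) := by
    rw [tendsto_nhdsWithin_iff]
    exact ⟨hx0, hxpos.mono fun t ht => ne_of_gt ht⟩
  -- eventually key facts
  have hkey : ∀ᶠ t in atTop, 0 < lam t ∧ x t ^ 2 = 2 * (lam t * ε ^ 2) ∧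
      Real.exp (-r t) = lam t * ε ^ 2 * Real.exp ρ ∧ σ t = 1 / Real.cosh (x t) := by
    filter_upwards [eventually_gt_atTop 0] with t ht
    have hl := hpos t ht
    refine ⟨hl, ?_, ?_, hσ t⟩
    · have h2 : (0:ℝ) ≤ 2 * lam t := by linarith
      rw [hx]; simp only []
      rw [mul_pow, Real.sq_sqrt h2]; ring
    · have hlε : 0 < lam t * ε ^ 2 := by positivity
      rw [hr t]
      rw [show -(-Real.log (lam t * ε ^ 2) - ρ) = Real.log (lam t * ε ^ 2) + ρ by ring,
        Real.exp_add, Real.exp_log hlε]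
  -- A and B
  have hσlim : Tendsto σ atTop (𝓝 1) := by
    have hc : Tendsto (fun t => Real.cosh (x t)) atTop (𝓝 1) := by
      have := (Real.continuous_cosh.tendsto 0).comp hx0
      rw [Real.cosh_zero] at this; exact this
    have h5 := hc.inv₀ one_ne_zero
    rw [inv_one] at h5
    refine h5.congr' ?_
    filter_upwards [hkey] with t ⟨_, _, _, h4⟩
    rw [h4, one_div]
  have hexp0 : Tendsto (fun t => Real.exp (-t) / (lam t * ε ^ 2)) atTop (𝓝 0) := by
    have h2 : Tendsto (fun t => Real.exp (-(t + Real.log (lam t * ε ^ 2)))) atTop (𝓝 0) :=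
      Real.tendsto_exp_atBot.comp (tendsto_neg_atBot_iff.mpr h1)
    refine h2.congr' ?_
    filter_upwards [hkey] with t ⟨hl, _, _, _⟩
    have hlε : 0 < lam t * ε ^ 2 := by positivity
    rw [neg_add, Real.exp_add, Real.exp_neg (Real.log _), Real.exp_log hlε]
    ring
  have hA : Tendsto (fun t => σ t * (Real.exp ρ - Real.exp (-t) / (lam t * ε ^ 2)))
      atTop (𝓝 (Real.exp ρ)) := by
    have := hσlim.mul ((tendsto_const_nhds (x := Real.exp ρ)).sub hexp0)
    simpa using this
  have hB : Tendsto (fun t => (1 - σ t) / (lam t * ε ^ 2) + σ t * Real.exp ρ)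
      atTop (𝓝 (1 + Real.exp ρ)) := by
    have hg := aux_sech.comp hxne
    have hg' : Tendsto (fun t => (1 - σ t) / (lam t * ε ^ 2)) atTop (𝓝 1) := by
      refine hg.congr' ?_
      filter_upwards [hkey] with t ⟨hl, h2, _, h4⟩
      simp only [Function.comp_apply]
      rw [h4, h2]; ring_nf
    have := hg'.add (hσlim.mul (tendsto_const_nhds (x := Real.exp ρ)))
    simpa using this
  have hBne : (1 : ℝ) + Real.exp ρ ≠ 0 := by positivity
  have hdiv := hA.div hB hBne
  have hval : Real.exp ρ / (1 + Real.exp ρ) = 1 / (Real.exp (-ρ) + 1) := by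
    rw [Real.exp_neg]
    have h1 : Real.exp ρ ≠ 0 := Real.exp_ne_zero ρ
    field_simp
  rw [← hval]
  refine hdiv.congr' ?_
  filter_upwards [hkey] with t ⟨hl, h2, h3, h4⟩
  have hlε : 0 < lam t * ε ^ 2 := by positivity
  have hlε' : lam t * ε ^ 2 ≠ 0 := ne_of_gt hlε
  rw [h3, Pi.div_apply]
  field_simp
  try ring
end

section
/- For every T ∈ ℝ, ∫₀^∞ ( 1 − (1 − e^{−Δ})/(e^{−Δ−T} + 1) ) dΔ = (1 + e^{T}) ln(1 + e^{−T}). Moreover, lim_{T→∞} (1 + e^{T}) ln(1 + e^{−T}) = 1 and lim_{T→−∞} (1 + e^{T}) ln(1 + e^{−T}) / (−T) = 1. -/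
open MeasureTheory

/-- The mean of the waiting-time law `q_{∞,T}(e ≤ Δ) = (1-e^{-Δ})/(e^{-Δ-T}+1)`:
`∫₀^∞ (1 - (1-e^{-Δ})/(e^{-Δ-T}+1)) dΔ = (1+e^T) ln(1+e^{-T})`, which tends to `1` as
`T → ∞` and behaves like `-T` as `T → -∞`. -/
theorem stmt12 (T : ℝ) :
    (∫ Δ in Set.Ioi (0 : ℝ),
        (1 - (1 - Real.exp (-Δ)) / (Real.exp (-Δ - T) + 1)))
      = (1 + Real.exp T) * Real.log (1 + Real.exp (-T)) ∧
    Filter.Tendsto (fun T : ℝ => (1 + Real.exp T) * Real.log (1 + Real.exp (-T)))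
      Filter.atTop (nhds 1) ∧
    Filter.Tendsto
      (fun T : ℝ => (1 + Real.exp T) * Real.log (1 + Real.exp (-T)) / (-T))
      Filter.atBot (nhds 1) := by
  refine ⟨?_, ?_, ?_⟩
  · -- the integral computation
    set a := Real.exp (-T) with ha_def
    have ha : 0 < a := Real.exp_pos _
    set g : ℝ → ℝ := fun Δ => -((1 + a) / a * Real.log (a * Real.exp (-Δ) + 1)) with hg_def
    have hderiv : ∀ x ∈ Set.Ici (0 : ℝ),
        HasDerivAt g (1 - (1 - Real.exp (-x)) / (Real.exp (-x - T) + 1)) x := by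
      intro x _
      have hx : (0 : ℝ) < a * Real.exp (-x) + 1 := by positivity
      have h1 : HasDerivAt (fun Δ : ℝ => a * Real.exp (-Δ) + 1) (-(a * Real.exp (-x))) x := by
        have h := ((Real.hasDerivAt_exp (-x)).comp x ((hasDerivAt_id x).neg)).const_mul a
        simpa [mul_comm] using h.add_const 1
      have h2 := ((h1.log (ne_of_gt hx)).const_mul ((1 + a) / a)).neg
      refine h2.congr_deriv ?_
      have hd : Real.exp (-x - T) = a * Real.exp (-x) := by
        rw [ha_def, ← Real.exp_add]; ring_nf
      rw [hd]
      field_simp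
      ring
    have hpos : ∀ x ∈ Set.Ioi (0 : ℝ),
        0 ≤ 1 - (1 - Real.exp (-x)) / (Real.exp (-x - T) + 1) := by
      intro x _
      have hx : (0 : ℝ) < Real.exp (-x - T) + 1 := by positivity
      have : (1 - Real.exp (-x)) / (Real.exp (-x - T) + 1) ≤ 1 := by
        rw [div_le_one hx]
        have := Real.exp_pos (-x)
        have := Real.exp_pos (-x - T)
        linarith
      linarith
    have hlim : Filter.Tendsto g Filter.atTop (nhds 0) := by
      have h1 : Filter.Tendsto (fun Δ : ℝ => a * Real.exp (-Δ) + 1) Filter.atTop (nhds 1) := by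
        have := (Real.tendsto_exp_neg_atTop_nhds_zero).const_mul a
        simpa using this.add_const 1
      have h2 : Filter.Tendsto (fun Δ : ℝ => Real.log (a * Real.exp (-Δ) + 1))
          Filter.atTop (nhds 0) := by
        have := (Real.continuousAt_log (by norm_num : (1:ℝ) ≠ 0)).tendsto.comp h1
        simpa [Function.comp_def] using this
      have := (h2.const_mul ((1 + a) / a)).neg
      simpa [hg_def] using this
    have := integral_Ioi_of_hasDerivAt_of_nonneg' hderiv hpos hlim
    rw [this]
    have hg0 : g 0 = -((1 + a) / a * Real.log (a + 1)) := by simp [hg_def]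
    rw [hg0]
    have hinv : (1 + a) / a = 1 + Real.exp T := by
      rw [div_eq_iff (ne_of_gt ha), ha_def]
      have h : Real.exp T * Real.exp (-T) = 1 := by
        rw [← Real.exp_add]; simp
      nlinarith [h]
    rw [hinv]
    ring_nf
  · -- limit as T → ∞
    have hslope : Filter.Tendsto (fun x : ℝ => Real.log (1 + x) / x)
        (nhdsWithin 0 {(0:ℝ)}ᶜ) (nhds 1) := by
      have hd : HasDerivAt (fun x : ℝ => Real.log (1 + x)) 1 0 := by
        have h1 : HasDerivAt (fun x : ℝ => 1 + x) 1 0 := (hasDerivAt_id 0).const_add 1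
        have h := h1.log (by norm_num)
        simpa using h
      have := hasDerivAt_iff_tendsto_slope.1 hd
      refine this.congr fun x => ?_
      simp [slope_def_field, div_eq_mul_inv, mul_comm]
    have hexp : Filter.Tendsto (fun T : ℝ => Real.exp (-T)) Filter.atTop
        (nhdsWithin 0 {(0:ℝ)}ᶜ) := by
      refine tendsto_nhdsWithin_iff.2 ⟨?_, ?_⟩
      · simpa using Real.tendsto_exp_neg_atTop_nhds_zero
      · exact Filter.Eventually.of_forall fun T => by
          simpa using ne_of_gt (Real.exp_pos (-T))
    have h1 : Filter.Tendsto (fun T : ℝ => Real.log (1 + Real.exp (-T)) / Real.exp (-T))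
        Filter.atTop (nhds 1) := hslope.comp hexp
    have h2 : Filter.Tendsto (fun T : ℝ => Real.log (1 + Real.exp (-T)))
        Filter.atTop (nhds 0) := by
      have hc : Filter.Tendsto (fun T : ℝ => 1 + Real.exp (-T)) Filter.atTop (nhds 1) := by
        simpa using Real.tendsto_exp_neg_atTop_nhds_zero.const_add 1
      have := (Real.continuousAt_log (by norm_num : (1:ℝ) ≠ 0)).tendsto.comp hc
      simpa [Function.comp_def] using this
    have key : Filter.Tendsto
        (fun T : ℝ => Real.log (1 + Real.exp (-T)) +
          Real.log (1 + Real.exp (-T)) / Real.exp (-T)) Filter.atTop (nhds 1) := by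
      simpa using h2.add h1
    refine key.congr fun T => ?_
    have h := Real.exp_pos (-T)
    rw [div_eq_mul_inv, ← Real.exp_neg, neg_neg]
    ring
  · -- limit as T → -∞
    have hlog0 : Filter.Tendsto (fun T : ℝ => Real.log (1 + Real.exp T)) Filter.atBot
        (nhds 0) := by
      have hc : Filter.Tendsto (fun T : ℝ => 1 + Real.exp T) Filter.atBot (nhds 1) := by
        simpa using Real.tendsto_exp_atBot.const_add 1
      have := (Real.continuousAt_log (by norm_num : (1:ℝ) ≠ 0)).tendsto.comp hc
      simpa [Function.comp_def] using this
    have hexp0 : Filter.Tendsto (fun T : ℝ => Real.exp T) Filter.atBot (nhds 0) :=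
      Real.tendsto_exp_atBot
    have hinv : Filter.Tendsto (fun T : ℝ => (-T)⁻¹) Filter.atBot (nhds 0) := by
      have : Filter.Tendsto (fun T : ℝ => -T) Filter.atBot Filter.atTop :=
        Filter.tendsto_neg_atBot_atTop
      exact Filter.Tendsto.comp tendsto_inv_atTop_zero this
    have key : Filter.Tendsto
        (fun T : ℝ => (1 + Real.exp T) * (1 + Real.log (1 + Real.exp T) * (-T)⁻¹))
        Filter.atBot (nhds 1) := by
      have h1 : Filter.Tendsto (fun T : ℝ => 1 + Real.exp T) Filter.atBot (nhds 1) := by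
        simpa using hexp0.const_add 1
      have h2 : Filter.Tendsto (fun T : ℝ => 1 + Real.log (1 + Real.exp T) * (-T)⁻¹)
          Filter.atBot (nhds 1) := by
        have := hlog0.mul hinv
        simpa using this.const_add 1
      simpa using h1.mul h2
    refine key.congr' ?_
    filter_upwards [Filter.eventually_lt_atBot (0:ℝ)] with T hT
    have hT' : (-T) ≠ 0 := by linarith
    have hlogeq : Real.log (1 + Real.exp (-T)) = -T + Real.log (1 + Real.exp T) := by
      have h1 : (1:ℝ) + Real.exp (-T) = Real.exp (-T) * (1 + Real.exp T) := by
        rw [mul_add, mul_one, ← Real.exp_add, neg_add_cancel, Real.exp_zero, add_comm]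
      rw [h1, Real.log_mul (ne_of_gt (Real.exp_pos _)) (by positivity), Real.log_exp]
    rw [hlogeq]
    have hT0 : T ≠ 0 := ne_of_lt hT
    field_simp [hT0]
    ring
end

section
/- Let σ ∈ (0,1) and define v(t) = e^{−t}/((1−σ) + σe^{−t}). Suppose u : [0,∞) × ℝ → ℝ is continuously differentiable in t and twice continuously differentiable in x on (0,∞) × ℝ and satisfies ∂_t u(t,x) = (1/2) ∂_{xx} u(t,x) − u(t,x) + σ u(t,x)² there. Define w(t,x) := 1 − u(t,x)/v(t). Then w satisfies ∂_t w(t,x) = (1/2) ∂_{xx} w(t,x) + w(t,x)(1 − w(t,x)) · σ/((1−σ)e^{t} + σ) on (0,∞) × ℝ. -/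
/-- Lemma 6.1: if `u` solves `∂_t u = ½∂_{xx}u - u + σu²` on `(0,∞) × ℝ` and
`v(t) = e^{-t}/((1-σ)+σe^{-t})`, then `w = 1 - u/v` solves the time-dependent F-KPP
equation `∂_t w = ½∂_{xx}w + w(1-w)·σ/((1-σ)e^t+σ)`. The derivatives of `u` in `t` and
(twice) in `x` are given by the continuous functions `ut`, `ux`, `uxx`. -/
theorem stmt13 (σ : ℝ) (hσ : σ ∈ Set.Ioo (0 : ℝ) 1)
    (v : ℝ → ℝ) (hv : ∀ t, v t = Real.exp (-t) / ((1 - σ) + σ * Real.exp (-t)))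
    (u ut ux uxx : ℝ → ℝ → ℝ)
    (hut : ∀ t > (0 : ℝ), ∀ x, HasDerivAt (fun τ => u τ x) (ut t x) t)
    (hux : ∀ t > (0 : ℝ), ∀ x, HasDerivAt (fun y => u t y) (ux t x) x)
    (huxx : ∀ t > (0 : ℝ), ∀ x, HasDerivAt (fun y => ux t y) (uxx t x) x)
    (hut_cont : ContinuousOn (fun q : ℝ × ℝ => ut q.1 q.2) (Set.Ioi 0 ×ˢ Set.univ))
    (hux_cont : ContinuousOn (fun q : ℝ × ℝ => ux q.1 q.2) (Set.Ioi 0 ×ˢ Set.univ))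
    (huxx_cont : ContinuousOn (fun q : ℝ × ℝ => uxx q.1 q.2) (Set.Ioi 0 ×ˢ Set.univ))
    (hpde : ∀ t > (0 : ℝ), ∀ x,
      ut t x = (1 / 2) * uxx t x - u t x + σ * (u t x) ^ 2)
    (w : ℝ → ℝ → ℝ) (hw : ∀ t x, w t x = 1 - u t x / v t) :
    ∀ t > (0 : ℝ), ∀ x,
      HasDerivAt (fun τ => w τ x)
        ((1 / 2) * (-(uxx t x) / v t)
          + w t x * (1 - w t x) * (σ / ((1 - σ) * Real.exp t + σ))) t ∧
      HasDerivAt (fun y => w t y) (-(ux t x) / v t) x ∧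
      HasDerivAt (fun y => -(ux t y) / v t) (-(uxx t x) / v t) x := by
  obtain ⟨hσ0, hσ1⟩ := hσ
  intro t ht x
  have hD : ∀ s : ℝ, (0:ℝ) < (1 - σ) + σ * Real.exp (-s) := fun s => by
    have := Real.exp_pos (-s); nlinarith
  have hvpos : ∀ s, 0 < v s := fun s => by
    rw [hv]; exact div_pos (Real.exp_pos _) (hD s)
  have hvne : v t ≠ 0 := (hvpos t).ne'
  have hv' : HasDerivAt v (σ * (v t) ^ 2 - v t) t := by
    have hnum : HasDerivAt (fun s : ℝ => Real.exp (-s)) (-Real.exp (-t)) t := by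
      simpa [Function.comp_def] using (Real.hasDerivAt_exp (-t)).comp t (hasDerivAt_neg t)
    have hden : HasDerivAt (fun s : ℝ => (1 - σ) + σ * Real.exp (-s))
        (σ * -Real.exp (-t)) t := (hnum.const_mul σ).const_add _
    have hdiv : HasDerivAt (fun s : ℝ => Real.exp (-s) / ((1 - σ) + σ * Real.exp (-s))) _ t :=
      hnum.div hden (hD t).ne'
    have heq : v = fun s => Real.exp (-s) / ((1 - σ) + σ * Real.exp (-s)) := funext hv
    rw [heq]
    convert hdiv using 1
    have hDt := (hD t).ne'
    beta_reduce
    field_simp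
    ring
  have hq : HasDerivAt (fun τ => u τ x / v τ)
      ((ut t x * v t - u t x * (σ * (v t) ^ 2 - v t)) / (v t) ^ 2) t :=
    (hut t ht x).div hv' hvne
  have hwt : HasDerivAt (fun τ => w τ x)
      (-((ut t x * v t - u t x * (σ * (v t) ^ 2 - v t)) / (v t) ^ 2)) t := by
    have heq : (fun τ => w τ x) = fun τ => 1 - u τ x / v τ := funext fun τ => hw τ x
    rw [heq]
    simpa using hq.const_sub 1
  refine ⟨?_, ?_, ?_⟩
  · convert hwt using 1
    have hE : Real.exp t ≠ 0 := (Real.exp_pos t).ne'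
    have hDen : (1 - σ) * Real.exp t + σ ≠ 0 := by nlinarith [Real.exp_pos t]
    have hDt := (hD t).ne'
    rw [hpde t ht x, hw, hv, Real.exp_neg] at *
    field_simp
    ring
  · have heq : (fun y => w t y) = fun y => 1 - u t y / v t := funext (hw t)
    rw [heq]
    simpa [neg_div] using ((hux t ht x).div_const (v t)).const_sub 1
  · simpa [neg_div] using ((huxx t ht x).neg).div_const (v t)
end

section
/- Let g : [0,∞) → [0,1] be continuous and non-increasing, set G(t) = ∫₀^t g(s) ds, and let ρ : ℝ → [0,1] be continuous. Let ψ and ψ₀ be bounded continuous functions on [0,∞) × ℝ with values in [0,1], continuously differentiable in t and twice continuously differentiable in x on (0,∞) × ℝ, such that ∂_t ψ = (1/2)∂_{xx} ψ + g(t) ψ(1−ψ) and ∂_t ψ₀ = (1/2)∂_{xx} ψ₀ + ψ₀(1−ψ₀) on (0,∞) × ℝ, with the same initial condition ψ(0,x) = ψ₀(0,x) = ρ(x) for all x ∈ ℝ. Then for all t ≥ 0 and x ∈ ℝ, e^{G(t)−t} ψ₀(t,x) ≤ ψ(t,x) ≤ ψ₀(t,x). -/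
open Set Filter Topology
set_option maxHeartbeats 1600000

/-- One-sided derivative test: if `f` has a minimum over `[0,a]` at the right endpoint `a`,
then its derivative there is nonpositive. -/
lemma aux_deriv_nonpos_of_min_left {f : ℝ → ℝ} {f' a : ℝ} (ha : 0 < a)
    (hd : HasDerivAt f f' a) (hmin : ∀ t ∈ Set.Icc (0:ℝ) a, f a ≤ f t) : f' ≤ 0 := by
  have h := hasDerivAt_iff_tendsto_slope.mp hd
  have h2 : Tendsto (slope f a) (𝓝[<] a) (𝓝 f') :=
    h.mono_left (nhdsWithin_mono _ (fun y hy => ne_of_lt hy))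
  have hev : ∀ᶠ y in 𝓝[<] a, slope f a y ≤ 0 := by
    filter_upwards [Ioo_mem_nhdsLT_of_mem (⟨ha, le_refl a⟩ : a ∈ Set.Ioc 0 a)] with y hy
    have hnum : 0 ≤ f y - f a := sub_nonneg.2 (hmin y ⟨hy.1.le, hy.2.le⟩)
    have hden : y - a ≤ 0 := sub_nonpos.2 hy.2.le
    rw [slope_def_field]
    exact div_nonpos_of_nonneg_of_nonpos hnum hden
  exact le_of_tendsto h2 hev

/-- Second derivative test: at a local minimum, the second derivative is nonnegative. -/
lemma aux_second_deriv_nonneg {f f' : ℝ → ℝ} {d x₀ : ℝ}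
    (hf : ∀ x, HasDerivAt f (f' x) x) (hf' : HasDerivAt f' d x₀)
    (hmin : IsLocalMin f x₀) : 0 ≤ d := by
  by_contra hneg
  push_neg at hneg
  have hzero : f' x₀ = 0 := by
    have := hmin.deriv_eq_zero
    rwa [(hf x₀).deriv] at this
  have hsl := hasDerivAt_iff_tendsto_slope.mp hf'
  have h2 : Tendsto (slope f' x₀) (𝓝[>] x₀) (𝓝 d) :=
    hsl.mono_left (nhdsWithin_mono _ (fun y hy => ne_of_gt hy))
  have hev : ∀ᶠ y in 𝓝[>] x₀, f' y < 0 := by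
    filter_upwards [h2.eventually_lt_const hneg, self_mem_nhdsWithin] with y hy hy'
    rw [slope_def_field, hzero, sub_zero] at hy
    have hypos : 0 < y - x₀ := sub_pos.2 hy'
    have := mul_neg_of_neg_of_pos hy hypos
    rwa [div_mul_cancel₀ _ (ne_of_gt hypos)] at this
  have hev2 : ∀ᶠ y in 𝓝[>] x₀, f x₀ ≤ f y :=
    (hmin.filter_mono nhdsWithin_le_nhds)
  obtain ⟨u, hu, hsub⟩ := mem_nhdsGT_iff_exists_Ioc_subset.mp (hev.and hev2)
  have hcont : ContinuousOn f (Set.Icc x₀ u) :=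
    (continuous_iff_continuousAt.mpr fun x => (hf x).continuousAt).continuousOn
  have hanti : StrictAntiOn f (Set.Icc x₀ u) := by
    apply strictAntiOn_of_deriv_neg (convex_Icc _ _) hcont
    intro y hy
    rw [interior_Icc] at hy
    rw [(hf y).deriv]
    exact (hsub ⟨hy.1, hy.2.le⟩).1
  have h3 : f u < f x₀ := hanti ⟨le_refl _, hu.le⟩ ⟨hu.le, le_refl _⟩ hu
  exact absurd (hsub ⟨hu, le_refl u⟩).2 (not_le.mpr h3)

/-- Maximum principle for `w_t ≥ ½ w_xx + c w` on `(0,∞) × ℝ` with `|c| ≤ 1`,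
bounded `w`, nonnegative initial data: `w ≥ 0`. -/
lemma aux_max_principle (w c wt wx wxx : ℝ → ℝ → ℝ) (M : ℝ)
    (hM : ∀ t ≥ (0:ℝ), ∀ x, |w t x| ≤ M)
    (hc : ∀ t > (0:ℝ), ∀ x, c t x ∈ Set.Icc (-1:ℝ) 1)
    (hcont : ContinuousOn (fun q : ℝ × ℝ => w q.1 q.2) (Set.Ici 0 ×ˢ Set.univ))
    (hwt : ∀ t > (0:ℝ), ∀ x, HasDerivAt (fun τ => w τ x) (wt t x) t)
    (hwx : ∀ t > (0:ℝ), ∀ x, HasDerivAt (fun y => w t y) (wx t x) x)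
    (hwxx : ∀ t > (0:ℝ), ∀ x, HasDerivAt (fun y => wx t y) (wxx t x) x)
    (hineq : ∀ t > (0:ℝ), ∀ x, (1/2) * wxx t x + c t x * w t x ≤ wt t x)
    (hinit : ∀ x, 0 ≤ w 0 x) :
    ∀ t ≥ (0:ℝ), ∀ x, 0 ≤ w t x := by
  intro T hT X
  have hM0 : 0 ≤ M := le_trans (abs_nonneg _) (hM 0 le_rfl 0)
  -- reduce to: for every ε > 0, the barrier-corrected function is nonnegative at (T, X)
  have key : ∀ ε > (0:ℝ), 0 ≤ Real.exp (-(3*T)) * w T X + ε * (1 + X^2) := by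
    intro ε hε
    by_contra hcon
    push_neg at hcon
    -- the barrier-corrected function, as a function on the product
    set Z : ℝ × ℝ → ℝ := fun q => Real.exp (-(3*q.1)) * w q.1 q.2 + ε * (1 + q.2^2) with hZ
    have hc1 : Continuous fun q : ℝ × ℝ => Real.exp (-(3*q.1)) := by fun_prop
    have hc2 : Continuous fun q : ℝ × ℝ => ε * (1 + q.2^2) := by fun_prop
    have hZcont : ContinuousOn Z (Set.Icc 0 T ×ˢ Set.Icc (-(Real.sqrt ((M+1)/ε))) (Real.sqrt ((M+1)/ε))) := by
      apply ContinuousOn.add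
      · apply ContinuousOn.mul hc1.continuousOn
        apply hcont.mono
        intro q hq
        exact ⟨hq.1.1, trivial⟩
      · exact hc2.continuousOn
    set R : ℝ := Real.sqrt ((M+1)/ε) with hR
    have hR2 : ε * R^2 = M + 1 := by
      rw [hR, Real.sq_sqrt (by positivity)]
      field_simp
    have hRnn : 0 ≤ R := Real.sqrt_nonneg _
    -- generic bound: Z q < 0 forces |q.2| < R, given q.1 ∈ [0, T]
    have hfar : ∀ t ∈ Set.Icc (0:ℝ) T, ∀ y : ℝ,
        Real.exp (-(3*t)) * w t y + ε * (1 + y^2) < 0 → y ∈ Set.Ioo (-R) R := by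
      intro t ht y hy
      have hexp1 : Real.exp (-(3*t)) ≤ 1 := Real.exp_le_one_iff.mpr (by nlinarith [ht.1])
      have hexp0 : 0 < Real.exp (-(3*t)) := Real.exp_pos _
      have hw : |w t y| ≤ M := hM t ht.1 y
      have h1 : -M ≤ Real.exp (-(3*t)) * w t y := by
        have := (abs_le.mp hw).1
        nlinarith [abs_nonneg (w t y)]
      have h2 : ε * y^2 < M + 1 := by nlinarith
      have h3 : y^2 < R^2 := by
        have := hR2
        nlinarith
      constructor
      · nlinarith [sq_nonneg (y + R)]
      · nlinarith [sq_nonneg (y - R)]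
    have hTX : (T, X) ∈ Set.Icc (0:ℝ) T ×ˢ Set.Icc (-R) R := by
      refine ⟨⟨hT, le_rfl⟩, ?_⟩
      have := hfar T ⟨hT, le_rfl⟩ X hcon
      exact ⟨this.1.le, this.2.le⟩
    obtain ⟨p, hpK, hpmin⟩ := (isCompact_Icc.prod isCompact_Icc).exists_isMinOn
      ⟨(T, X), hTX⟩ hZcont
    obtain ⟨t₀, x₀⟩ := p
    have hpt : t₀ ∈ Set.Icc (0:ℝ) T := hpK.1
    have hpx : x₀ ∈ Set.Icc (-R) R := hpK.2
    have hm : ∀ t' ∈ Set.Icc (0:ℝ) T, ∀ y' ∈ Set.Icc (-R) R,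
        Real.exp (-(3*t₀)) * w t₀ x₀ + ε * (1 + x₀^2)
          ≤ Real.exp (-(3*t')) * w t' y' + ε * (1 + y'^2) :=
      fun t' ht' y' hy' => isMinOn_iff.mp hpmin (t', y') (Set.mk_mem_prod ht' hy')
    have hZneg : Real.exp (-(3*t₀)) * w t₀ x₀ + ε * (1 + x₀^2) < 0 :=
      lt_of_le_of_lt (hm T ⟨hT, le_rfl⟩ X hTX.2) hcon
    -- t₀ > 0
    have ht₀ : 0 < t₀ := by
      rcases hpt.1.lt_or_eq with h | h
      · exact h
      · exfalso
        rw [← h] at hZneg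
        simp at hZneg
        nlinarith [hinit x₀, sq_nonneg x₀]
    -- x₀ interior
    have hx₀ : x₀ ∈ Set.Ioo (-R) R := hfar t₀ hpt x₀ hZneg
    set E : ℝ := Real.exp (-(3*t₀)) with hE
    have hEpos : 0 < E := Real.exp_pos _
    -- time derivative at (t₀, x₀) is ≤ 0
    have hdt : HasDerivAt (fun τ => Real.exp (-(3*τ)) * w τ x₀ + ε * (1 + x₀^2))
        (E * -3 * w t₀ x₀ + E * wt t₀ x₀) t₀ := by
      have h1 : HasDerivAt (fun τ : ℝ => Real.exp (-(3*τ))) (E * -3) t₀ := by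
        have : HasDerivAt (fun τ : ℝ => -(3*τ)) (-3) t₀ := by
          simpa using ((hasDerivAt_id t₀).const_mul (3:ℝ)).fun_neg
        simpa [hE] using this.exp
      exact (h1.mul (hwt t₀ ht₀ x₀)).add_const _
    have hdt_le : E * -3 * w t₀ x₀ + E * wt t₀ x₀ ≤ 0 := by
      apply aux_deriv_nonpos_of_min_left ht₀ hdt
      intro τ hτ
      have := hm τ ⟨hτ.1, le_trans hτ.2 hpt.2⟩ x₀ hpx
      simpa [hE] using this
    -- second space derivative at (t₀, x₀) is ≥ 0
    have hdx : ∀ y, HasDerivAt (fun y => E * w t₀ y + ε * (1 + y^2))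
        (E * wx t₀ y + ε * (2*y)) y := by
      intro y
      have h1 : HasDerivAt (fun y : ℝ => ε * (1 + y^2)) (ε * (2*y)) y := by
        have : HasDerivAt (fun y : ℝ => 1 + y^2) (2*y) y := by
          simpa using (hasDerivAt_pow 2 y).const_add (1:ℝ)
        simpa using this.const_mul ε
      exact ((hwx t₀ ht₀ y).const_mul E).add h1
    have hdxx : HasDerivAt (fun y => E * wx t₀ y + ε * (2*y)) (E * wxx t₀ x₀ + ε * 2) x₀ := by
      have h1 : HasDerivAt (fun y : ℝ => ε * (2*y)) (ε * 2) x₀ := by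
        simpa using ((hasDerivAt_id x₀).const_mul (2:ℝ)).const_mul ε
      exact ((hwxx t₀ ht₀ x₀).const_mul E).add h1
    have hlocmin : IsLocalMin (fun y => E * w t₀ y + ε * (1 + y^2)) x₀ := by
      filter_upwards [isOpen_Ioo.mem_nhds hx₀] with y hy
      have := hm t₀ hpt y ⟨hy.1.le, hy.2.le⟩
      simpa [hE] using this
    have hdxx_ge : 0 ≤ E * wxx t₀ x₀ + ε * 2 := aux_second_deriv_nonneg hdx hdxx hlocmin
    -- derive the contradiction
    have hpde := hineq t₀ ht₀ x₀
    have hcc := hc t₀ ht₀ x₀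
    have hzval : E * w t₀ x₀ + ε * (1 + x₀^2) < 0 := hZneg
    nlinarith [mul_le_mul_of_nonneg_left hpde hEpos.le, sq_nonneg x₀,
      mul_le_mul_of_nonpos_right (show c t₀ x₀ - 3 ≤ -2 by linarith [hcc.2])
        (show E * w t₀ x₀ ≤ 0 by nlinarith [sq_nonneg x₀]),
      hcc.1, hcc.2]
  -- let ε → 0
  have hfin : 0 ≤ Real.exp (-(3*T)) * w T X := by
    by_contra hcon
    push_neg at hcon
    have h1 : 0 < 1 + X^2 := by positivity
    have hε : 0 < -(Real.exp (-(3*T)) * w T X) / (2 * (1 + X^2)) :=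
      div_pos (by linarith) (by positivity)
    have := key _ hε
    have h2 : -(Real.exp (-(3*T)) * w T X) / (2 * (1 + X^2)) * (1 + X^2)
        = -(Real.exp (-(3*T)) * w T X) / 2 := by field_simp
    nlinarith
  nlinarith [Real.exp_pos (-(3*T)), hfin, mul_nonneg (Real.exp_pos (-(3*T))).le hfin]

/-- Lemma 6.3: comparison of the time-dependent F-KPP equation
`∂_t ψ = ½∂_{xx}ψ + g(t)ψ(1-ψ)` (with `0 ≤ g ≤ 1` continuous non-increasing) with the
standard F-KPP equation (`g ≡ 1`) for the same initial data `ρ` taking values in `[0,1]`: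
`e^{G(t)-t} ψ₀(t,x) ≤ ψ(t,x) ≤ ψ₀(t,x)`, where `G(t) = ∫₀^t g(s) ds`. -/
theorem stmt14 (g : ℝ → ℝ) (hg_cont : ContinuousOn g (Set.Ici 0))
    (hg_mono : AntitoneOn g (Set.Ici 0))
    (hg_mem : ∀ t ≥ (0 : ℝ), g t ∈ Set.Icc (0 : ℝ) 1)
    (G : ℝ → ℝ) (hG : ∀ t, G t = ∫ s in (0 : ℝ)..t, g s)
    (ρ : ℝ → ℝ) (hρ_cont : Continuous ρ) (hρ_mem : ∀ x, ρ x ∈ Set.Icc (0 : ℝ) 1)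
    (ψ ψ₀ : ℝ → ℝ → ℝ)
    (hψ_mem : ∀ t ≥ (0 : ℝ), ∀ x, ψ t x ∈ Set.Icc (0 : ℝ) 1)
    (hψ₀_mem : ∀ t ≥ (0 : ℝ), ∀ x, ψ₀ t x ∈ Set.Icc (0 : ℝ) 1)
    (hψ_cont : ContinuousOn (fun q : ℝ × ℝ => ψ q.1 q.2) (Set.Ici 0 ×ˢ Set.univ))
    (hψ₀_cont : ContinuousOn (fun q : ℝ × ℝ => ψ₀ q.1 q.2) (Set.Ici 0 ×ˢ Set.univ))
    (ψt ψx ψxx ψ₀t ψ₀x ψ₀xx : ℝ → ℝ → ℝ)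
    (hψt : ∀ t > (0 : ℝ), ∀ x, HasDerivAt (fun τ => ψ τ x) (ψt t x) t)
    (hψx : ∀ t > (0 : ℝ), ∀ x, HasDerivAt (fun y => ψ t y) (ψx t x) x)
    (hψxx : ∀ t > (0 : ℝ), ∀ x, HasDerivAt (fun y => ψx t y) (ψxx t x) x)
    (hψ₀t : ∀ t > (0 : ℝ), ∀ x, HasDerivAt (fun τ => ψ₀ τ x) (ψ₀t t x) t)
    (hψ₀x : ∀ t > (0 : ℝ), ∀ x, HasDerivAt (fun y => ψ₀ t y) (ψ₀x t x) x)
    (hψ₀xx : ∀ t > (0 : ℝ), ∀ x, HasDerivAt (fun y => ψ₀x t y) (ψ₀xx t x) x)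
    (hψt_cont : ContinuousOn (fun q : ℝ × ℝ => ψt q.1 q.2) (Set.Ioi 0 ×ˢ Set.univ))
    (hψxx_cont : ContinuousOn (fun q : ℝ × ℝ => ψxx q.1 q.2) (Set.Ioi 0 ×ˢ Set.univ))
    (hψ₀t_cont : ContinuousOn (fun q : ℝ × ℝ => ψ₀t q.1 q.2) (Set.Ioi 0 ×ˢ Set.univ))
    (hψ₀xx_cont : ContinuousOn (fun q : ℝ × ℝ => ψ₀xx q.1 q.2) (Set.Ioi 0 ×ˢ Set.univ))
    (hpde : ∀ t > (0 : ℝ), ∀ x,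
      ψt t x = (1 / 2) * ψxx t x + g t * (ψ t x * (1 - ψ t x)))
    (hpde₀ : ∀ t > (0 : ℝ), ∀ x,
      ψ₀t t x = (1 / 2) * ψ₀xx t x + ψ₀ t x * (1 - ψ₀ t x))
    (hinit : ∀ x, ψ 0 x = ρ x ∧ ψ₀ 0 x = ρ x) :
    ∀ t ≥ (0 : ℝ), ∀ x,
      Real.exp (G t - t) * ψ₀ t x ≤ ψ t x ∧ ψ t x ≤ ψ₀ t x := by

  -- basic facts about G
  have hg_int : ∀ a b : ℝ, 0 ≤ a → 0 ≤ b → IntervalIntegrable g MeasureTheory.volume a b := by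
    intro a b ha hb
    apply ContinuousOn.intervalIntegrable
    apply hg_cont.mono
    intro x hx
    rcases Set.mem_uIcc.mp hx with h | h
    · exact le_trans ha h.1
    · exact le_trans hb h.1
  have hGd : ∀ t > (0:ℝ), HasDerivAt G (g t) t := by
    intro t ht
    have hfun : (fun u => ∫ s in (0:ℝ)..u, g s) = G := funext fun u => (hG u).symm
    rw [← hfun]
    apply intervalIntegral.integral_hasDerivAt_right (hg_int 0 t le_rfl ht.le)
    · exact ContinuousOn.stronglyMeasurableAtFilter isOpen_Ioi
        (hg_cont.mono Set.Ioi_subset_Ici_self) t ht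
    · exact hg_cont.continuousAt (mem_of_superset (isOpen_Ioi.mem_nhds ht) Set.Ioi_subset_Ici_self)
  have hGnorm : ∀ s ∈ Set.Ici (0:ℝ), ∀ t ∈ Set.Ici (0:ℝ), |G s - G t| ≤ 1 * |s - t| := by
    intro s hs t ht
    rw [hG s, hG t]
    have hsub : (∫ u in (0:ℝ)..s, g u) - ∫ u in (0:ℝ)..t, g u = ∫ u in t..s, g u :=
      intervalIntegral.integral_interval_sub_left (hg_int 0 s le_rfl hs) (hg_int 0 t le_rfl ht)
    rw [hsub]
    have := intervalIntegral.norm_integral_le_of_norm_le_const (C := 1) (f := g)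
      (a := t) (b := s) ?_
    · simpa [Real.norm_eq_abs] using this
    · intro x hx
      have hx0 : (0:ℝ) ≤ x := by
        rcases Set.mem_uIoc.mp hx with h | h
        · exact le_trans ht h.1.le
        · exact le_trans hs h.1.le
      have := hg_mem x hx0
      rw [Real.norm_eq_abs, abs_le]
      exact ⟨by linarith [this.1], this.2⟩
  have hGcont : ContinuousOn G (Set.Ici 0) := by
    apply LipschitzOnWith.continuousOn (K := 1)
    apply LipschitzOnWith.of_dist_le_mul
    intro s hs t ht
    rw [Real.dist_eq, Real.dist_eq]
    simpa using hGnorm s hs t ht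
  have hG0 : G 0 = 0 := by rw [hG 0, intervalIntegral.integral_same]
  have hGle : ∀ t ≥ (0:ℝ), G t ≤ t := by
    intro t ht
    have := hGnorm t ht 0 Set.self_mem_Ici
    rw [hG0] at this
    rw [abs_le] at this
    cases' this with h1 h2
    calc G t = G t - 0 := by ring
    _ ≤ 1 * |t - 0| := h2
    _ = t := by rw [abs_of_nonneg (by linarith : (0:ℝ) ≤ t - 0)]; ring
  -- Step 1: ψ ≤ ψ₀ by the maximum principle applied to w = ψ₀ - ψ
  have hle : ∀ t ≥ (0:ℝ), ∀ x, ψ t x ≤ ψ₀ t x := by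
    have H := aux_max_principle (fun t y => ψ₀ t y - ψ t y)
      (fun t y => g t * (1 - ψ t y - ψ₀ t y))
      (fun t y => ψ₀t t y - ψt t y) (fun t y => ψ₀x t y - ψx t y)
      (fun t y => ψ₀xx t y - ψxx t y) 1
      (by
        intro t ht x
        obtain ⟨ha0, ha1⟩ := hψ_mem t ht x
        obtain ⟨hb0, hb1⟩ := hψ₀_mem t ht x
        rw [abs_le]
        constructor <;> linarith)
      (by
        intro t ht x
        obtain ⟨ha0, ha1⟩ := hψ_mem t ht.le x
        obtain ⟨hb0, hb1⟩ := hψ₀_mem t ht.le x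
        obtain ⟨hg0, hg1⟩ := hg_mem t ht.le
        constructor
        · nlinarith [mul_le_mul_of_nonneg_left
            (show -1 ≤ 1 - ψ t x - ψ₀ t x by linarith) hg0]
        · nlinarith [mul_le_mul_of_nonneg_left
            (show 1 - ψ t x - ψ₀ t x ≤ 1 by linarith) hg0])
      (hψ₀_cont.sub hψ_cont)
      (fun t ht x => (hψ₀t t ht x).sub (hψt t ht x))
      (fun t ht x => (hψ₀x t ht x).sub (hψx t ht x))
      (fun t ht x => (hψ₀xx t ht x).sub (hψxx t ht x))
      (by
        intro t ht x
        rw [hpde t ht x, hpde₀ t ht x]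
        obtain ⟨ha0, ha1⟩ := hψ_mem t ht.le x
        obtain ⟨hb0, hb1⟩ := hψ₀_mem t ht.le x
        obtain ⟨hg0, hg1⟩ := hg_mem t ht.le
        nlinarith [mul_nonneg (show (0:ℝ) ≤ 1 - g t by linarith)
          (mul_nonneg hb0 (show (0:ℝ) ≤ 1 - ψ₀ t x by linarith))])
      (by
        intro x
        rw [(hinit x).1, (hinit x).2]
        simp)
    intro t ht x
    have := H t ht x
    linarith
  -- Step 2: e^{G(t)-t} ψ₀ ≤ ψ by the maximum principle applied to w = ψ - e^{G-t}ψ₀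
  have hge : ∀ t ≥ (0:ℝ), ∀ x, 0 ≤ ψ t x - Real.exp (G t - t) * ψ₀ t x := by
    have H := aux_max_principle (fun t y => ψ t y - Real.exp (G t - t) * ψ₀ t y)
      (fun t y => g t - ψ₀ t y)
      (fun t y => ψt t y - (Real.exp (G t - t) * (g t - 1) * ψ₀ t y
        + Real.exp (G t - t) * ψ₀t t y))
      (fun t y => ψx t y - Real.exp (G t - t) * ψ₀x t y)
      (fun t y => ψxx t y - Real.exp (G t - t) * ψ₀xx t y) 2
      (by
        intro t ht x
        obtain ⟨ha0, ha1⟩ := hψ_mem t ht x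
        obtain ⟨hb0, hb1⟩ := hψ₀_mem t ht x
        have hE0 : 0 < Real.exp (G t - t) := Real.exp_pos _
        have hE1 : Real.exp (G t - t) ≤ 1 :=
          Real.exp_le_one_iff.mpr (by linarith [hGle t ht])
        have h1 : 0 ≤ Real.exp (G t - t) * ψ₀ t x := mul_nonneg hE0.le hb0
        have h2 : Real.exp (G t - t) * ψ₀ t x ≤ 1 := by nlinarith
        rw [abs_le]
        constructor <;> linarith)
      (by
        intro t ht x
        obtain ⟨hb0, hb1⟩ := hψ₀_mem t ht.le x
        obtain ⟨hg0, hg1⟩ := hg_mem t ht.le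
        exact ⟨by linarith, by linarith⟩)
      (by
        have h1 : ContinuousOn (fun q : ℝ × ℝ => G q.1) (Set.Ici 0 ×ˢ Set.univ) :=
          hGcont.comp continuous_fst.continuousOn (fun q hq => hq.1)
        have h2 : ContinuousOn (fun q : ℝ × ℝ => Real.exp (G q.1 - q.1))
            (Set.Ici 0 ×ˢ Set.univ) :=
          Real.continuous_exp.comp_continuousOn (h1.sub continuous_fst.continuousOn)
        exact hψ_cont.sub (h2.mul hψ₀_cont))
      (by
        intro t ht x
        have hE : HasDerivAt (fun τ => Real.exp (G τ - τ)) (Real.exp (G t - t) * (g t - 1)) t :=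
          ((hGd t ht).sub (hasDerivAt_id t)).exp
        exact (hψt t ht x).sub (hE.mul (hψ₀t t ht x)))
      (by
        intro t ht x
        exact (hψx t ht x).sub ((hψ₀x t ht x).const_mul (Real.exp (G t - t))))
      (by
        intro t ht x
        exact (hψxx t ht x).sub ((hψ₀xx t ht x).const_mul (Real.exp (G t - t))))
      (by
        intro t ht x
        rw [hpde t ht x, hpde₀ t ht x]
        obtain ⟨ha0, ha1⟩ := hψ_mem t ht.le x
        obtain ⟨hb0, hb1⟩ := hψ₀_mem t ht.le x
        obtain ⟨hg0, hg1⟩ := hg_mem t ht.le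
        have hab : ψ t x ≤ ψ₀ t x := hle t ht.le x
        have hga : g t * ψ t x ≤ ψ t x := by
          nlinarith [mul_le_mul_of_nonneg_right hg1 ha0]
        have hkey : 0 ≤ ψ t x * (ψ₀ t x - g t * ψ t x) :=
          mul_nonneg ha0 (by linarith)
        nlinarith [hkey])
      (by
        intro x
        rw [(hinit x).1, (hinit x).2, hG0]
        simp)
    intro t ht x
    have := H t ht x
    simpa using this
  intro t ht x
  exact ⟨by linarith [hge t ht x], hle t ht x⟩
end

section
/- Let p₀, p₂ ∈ (0,1) with p₀ + p₂ = 1, let σ ∈ (0,1), set D := 1 − 4σp₂p₀ and v⁻ := (1 − √D)/(2σp₂), and let v(t) = v⁻ + e^{−√D t}/( 1/(1−v⁻) − (σp₂/√D)(1 − e^{−√D t}) ) be the solution of v' = σp₂v² − v + p₀ with v(0) = 1. Define N(t) := (1/v(t)) · e^{−√D t} / ( 1 − (σp₂(1−v⁻)/√D)(1 − e^{−√D t}) )². Then 0 < σp₂(1−v⁻)/√D < 1 and lim_{t→∞} e^{√D t} N(t) = (1/v⁻) · (1 − σp₂(1−v⁻)/√D)^{−2}; in particular N(t) → 0 exponentially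 fast as t → ∞. -/
/-- Section 8: with `c = σp₂(1-v⁻)/√D ∈ (0,1)`, the expected particle number
`N(t) = (1/v(t)) e^{-√D t}/(1 - c(1-e^{-√D t}))²` satisfies
`e^{√D t} N(t) → (1/v⁻)(1-c)⁻²`; in particular `N(t) → 0` exponentially fast. -/
theorem stmt19 (p₀ p₂ σ : ℝ) (hp₀ : p₀ ∈ Set.Ioo (0 : ℝ) 1) (hp₂ : p₂ ∈ Set.Ioo (0 : ℝ) 1)
    (hsum : p₀ + p₂ = 1) (hσ : σ ∈ Set.Ioo (0 : ℝ) 1)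
    (D : ℝ) (hD : D = 1 - 4 * σ * p₂ * p₀)
    (vm : ℝ) (hvm : vm = (1 - Real.sqrt D) / (2 * σ * p₂))
    (v : ℝ → ℝ)
    (hv : ∀ t, v t = vm + Real.exp (-Real.sqrt D * t) /
      (1 / (1 - vm) - (σ * p₂ / Real.sqrt D) * (1 - Real.exp (-Real.sqrt D * t))))
    (c : ℝ) (hc : c = σ * p₂ * (1 - vm) / Real.sqrt D)
    (N : ℝ → ℝ)
    (hN : ∀ t, N t = (1 / v t) * Real.exp (-Real.sqrt D * t) /
      (1 - c * (1 - Real.exp (-Real.sqrt D * t))) ^ 2) :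
    0 < c ∧ c < 1 ∧
    Filter.Tendsto (fun t => Real.exp (Real.sqrt D * t) * N t) Filter.atTop
      (nhds ((1 / vm) * ((1 - c) ^ 2)⁻¹)) ∧
    Filter.Tendsto N Filter.atTop (nhds 0) := by
  obtain ⟨hσ0, hσ1⟩ := hσ
  obtain ⟨h00, h01⟩ := hp₀
  obtain ⟨h20, h21⟩ := hp₂
  set s := Real.sqrt D with hs_def
  have hDpos : 0 < D := by nlinarith [sq_nonneg (p₂ - p₀), mul_pos h20 h00]
  have hD1 : D < 1 := by nlinarith [mul_pos (mul_pos hσ0 h20) h00]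
  have hs : 0 < s := Real.sqrt_pos.mpr hDpos
  have hssq : s ^ 2 = D := Real.sq_sqrt hDpos.le
  have hs1 : s < 1 := by
    nlinarith [hssq]
  have hsp : 0 < σ * p₂ := mul_pos hσ0 h20
  -- key inequality : 2σp₂ - 1 < s and 1 - 2σp₂ < s
  have hkey : 2 * σ * p₂ - 1 < s := by
    nlinarith [sq_nonneg (s + (2 * σ * p₂ - 1)), mul_pos hsp h20]
  have hkey2 : 1 - 2 * σ * p₂ < s := by
    nlinarith [sq_nonneg (s + (1 - 2 * σ * p₂)), mul_pos hsp h20]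
  have hvm_pos : 0 < vm := by
    rw [hvm]; exact div_pos (by linarith) (by positivity)
  have hvm_mul : σ * p₂ * vm = (1 - s) / 2 := by
    rw [hvm]; field_simp
  have hvm1 : vm < 1 := by
    rw [hvm, div_lt_one (by positivity)]
    linarith
  have hc_pos : 0 < c := by
    rw [hc]; exact div_pos (mul_pos hsp (by linarith)) hs
  have hc1 : c < 1 := by
    rw [hc, div_lt_one hs]
    nlinarith
  have hE : Filter.Tendsto (fun t => Real.exp (-s * t)) Filter.atTop (nhds 0) := by
      apply Real.tendsto_exp_atBot.comp
      have h1 : Filter.Tendsto (fun t : ℝ => s * t) Filter.atTop Filter.atTop :=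
        Filter.Tendsto.const_mul_atTop hs Filter.tendsto_id
      have h2 : Filter.Tendsto (fun t : ℝ => -(s * t)) Filter.atTop Filter.atBot :=
        Filter.tendsto_neg_atTop_atBot.comp h1
      exact h2.congr fun t => (neg_mul s t).symm
  have h1vm : (1:ℝ) - vm ≠ 0 := ne_of_gt (by linarith)
  have hAB : 1 / (1 - vm) - σ * p₂ / s = (1 - c) / (1 - vm) := by
    rw [hc]; field_simp
  have hABpos : 0 < 1 / (1 - vm) - σ * p₂ / s := by
    rw [hAB]; exact div_pos (by linarith) (by linarith)
  have hden : Filter.Tendsto (fun t => 1 / (1 - vm) - (σ * p₂ / s) * (1 - Real.exp (-s * t)))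
      Filter.atTop (nhds (1 / (1 - vm) - σ * p₂ / s)) := by
    have h1 : Filter.Tendsto (fun t => (1:ℝ) - Real.exp (-s * t)) Filter.atTop (nhds (1 - 0)) :=
      tendsto_const_nhds.sub hE
    have h2 : Filter.Tendsto (fun t => (σ * p₂ / s) * (1 - Real.exp (-s * t)))
        Filter.atTop (nhds ((σ * p₂ / s) * (1 - 0))) := h1.const_mul _
    have h3 : Filter.Tendsto (fun t => 1 / (1 - vm) - (σ * p₂ / s) * (1 - Real.exp (-s * t)))
        Filter.atTop (nhds (1 / (1 - vm) - (σ * p₂ / s) * (1 - 0))) := tendsto_const_nhds.sub h2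
    simpa using h3
  have hv_lim : Filter.Tendsto v Filter.atTop (nhds vm) := by
    have h0 : Filter.Tendsto (fun t => Real.exp (-s * t) /
        (1 / (1 - vm) - (σ * p₂ / s) * (1 - Real.exp (-s * t)))) Filter.atTop (nhds 0) := by
      have := hE.div hden hABpos.ne'
      rw [zero_div] at this
      exact this
    have := (tendsto_const_nhds (x := vm)).add h0
    rw [add_zero] at this
    exact this.congr fun t => (hv t).symm
  have hinv : Filter.Tendsto (fun t => 1 / v t) Filter.atTop (nhds (1 / vm)) :=
    tendsto_const_nhds.div hv_lim hvm_pos.ne'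
  have hsq : Filter.Tendsto (fun t => ((1 - c * (1 - Real.exp (-s * t))) ^ 2)⁻¹)
      Filter.atTop (nhds (((1 - c) ^ 2)⁻¹)) := by
    have h1 : Filter.Tendsto (fun t => (1:ℝ) - Real.exp (-s * t)) Filter.atTop (nhds (1 - 0)) :=
      tendsto_const_nhds.sub hE
    have h2 : Filter.Tendsto (fun t => c * (1 - Real.exp (-s * t)))
        Filter.atTop (nhds (c * (1 - 0))) := h1.const_mul _
    have hbase : Filter.Tendsto (fun t => 1 - c * (1 - Real.exp (-s * t)))
        Filter.atTop (nhds (1 - c * (1 - 0))) := tendsto_const_nhds.sub h2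
    have hne : ((1 : ℝ) - c * (1 - 0)) ^ 2 ≠ 0 := by
      have : (1:ℝ) - c ≠ 0 := by intro h; linarith [hc1, sub_eq_zero.mp h]
      simpa using pow_ne_zero 2 this
    have := (hbase.pow 2).inv₀ hne
    simpa using this
  have hmain : ∀ t, Real.exp (s * t) * N t =
      (1 / v t) * ((1 - c * (1 - Real.exp (-s * t))) ^ 2)⁻¹ := by
    intro t
    rw [hN t]
    calc Real.exp (s * t) * (1 / v t * Real.exp (-s * t) /
          (1 - c * (1 - Real.exp (-s * t))) ^ 2)
        = (Real.exp (s * t) * Real.exp (-s * t)) *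
          (1 / v t * ((1 - c * (1 - Real.exp (-s * t))) ^ 2)⁻¹) := by ring
      _ = _ := by
          rw [← Real.exp_add, show s * t + -s * t = 0 by ring, Real.exp_zero, one_mul]
  have hT : Filter.Tendsto (fun t => Real.exp (s * t) * N t) Filter.atTop
      (nhds ((1 / vm) * ((1 - c) ^ 2)⁻¹)) :=
    (hinv.mul hsq).congr fun t => (hmain t).symm
  have hT0 : Filter.Tendsto N Filter.atTop (nhds 0) := by
    have := hE.mul hT
    rw [zero_mul] at this
    exact this.congr fun t => by
      rw [← mul_assoc, ← Real.exp_add, show -s * t + s * t = 0 by ring, Real.exp_zero, one_mul]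
  exact ⟨hc_pos, hc1, hT, hT0⟩
end
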